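/- If a random matrix A ∈ ℝ^{p×p} satisfies E[exp{t·uᵀAu}] ≤ exp(c₁t²/n) for all |t| ≤ c₀n and all unit vectors u ∈ ℝ^p, then for any k ≥ 1 and δ ∈ (0,1) with log(2/δ) + k log(12p) ≤ n c₀² c₁, with probability at least 1 − δ, |uᵀAu| ≤ √( (16c₁/n)(log(2/δ) + k log(12p)) ) for all k-sparse unit vectors u ∈ ℝ^p. -/

import Mathlib

open MeasureTheory ProbabilityTheory Matrix Real Metric

/-- `u` is `k`-sparse. -/
def kSparse {p : ℕ} (k : ℕ) (u : Fin p → ℝ) : Prop :=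
  ∃ s : Finset (Fin p), s.card ≤ k ∧ ∀ i ∉ s, u i = 0

section AuxNet

lemma sphere_net (m : ℕ) (hm : 1 ≤ m) :
    ∃ N : Finset (EuclideanSpace ℝ (Fin m)), N.card ≤ 9 ^ m ∧ (∀ v ∈ N, ‖v‖ = 1) ∧
      ∀ x : EuclideanSpace ℝ (Fin m), ‖x‖ = 1 → ∃ v ∈ N, dist x v ≤ 1 / 4 := by
  classical
  set E := EuclideanSpace ℝ (Fin m) with hE
  haveI : Nonempty (Fin m) := Fin.pos_iff_nonempty.mp hm
  haveI : Nontrivial E := inferInstance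
  set P : Finset E → Prop := fun F =>
    (∀ v ∈ F, ‖v‖ = 1) ∧ (F : Set E).Pairwise fun a b => 1 / 4 < dist a b with hP
  -- cardinality bound for separated sets
  have hcard : ∀ F : Finset E, P F → F.card ≤ 9 ^ m := by
    intro F hF
    set V := volume (ball (0 : E) 1) with hV
    have hV0 : V ≠ 0 := (measure_ball_pos _ _ one_pos).ne'
    have hVt : V ≠ ⊤ := measure_ball_lt_top.ne
    have hdisj : (F : Set E).PairwiseDisjoint fun v => ball v (1 / 8 : ℝ) := by
      intro a ha b hb hab
      exact ball_disjoint_ball (by linarith [hF.2 ha hb hab])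
    have hsum : ∑ v ∈ F, volume (ball v (1 / 8 : ℝ))
        = volume (⋃ v ∈ F, ball v (1 / 8 : ℝ)) :=
      (measure_biUnion_finset hdisj fun v _ => measurableSet_ball).symm
    have hsub : (⋃ v ∈ F, ball v (1 / 8 : ℝ)) ⊆ ball (0 : E) (9 / 8) := by
      intro y hy
      simp only [Set.mem_iUnion] at hy
      obtain ⟨v, hv, hyv⟩ := hy
      have : dist y 0 ≤ dist y v + dist v 0 := dist_triangle _ _ _
      have hv1 : dist v 0 = 1 := by rw [dist_zero_right]; exact hF.1 v hv
      simp only [mem_ball] at hyv ⊢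
      linarith
    have hfr : Module.finrank ℝ E = m := finrank_euclideanSpace_fin
    have hball : ∀ v : E, volume (ball v (1 / 8 : ℝ))
        = ENNReal.ofReal ((1 / 8 : ℝ) ^ m) * V := by
      intro v
      rw [Measure.addHaar_ball volume v (by norm_num : (0:ℝ) ≤ 1/8), hfr]
    have h9 : volume (ball (0 : E) (9 / 8)) = ENNReal.ofReal ((9 / 8 : ℝ) ^ m) * V := by
      rw [Measure.addHaar_ball volume _ (by norm_num : (0:ℝ) ≤ 9/8), hfr]
    have key : ((F.card : ENNReal) * ENNReal.ofReal ((1 / 8 : ℝ) ^ m)) * V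
        ≤ ENNReal.ofReal ((9 / 8 : ℝ) ^ m) * V := by
      calc ((F.card : ENNReal) * ENNReal.ofReal ((1 / 8 : ℝ) ^ m)) * V
          = ∑ v ∈ F, volume (ball v (1 / 8 : ℝ)) := by
            rw [Finset.sum_congr rfl fun v _ => hball v, Finset.sum_const, nsmul_eq_mul,
              mul_assoc]
        _ = volume (⋃ v ∈ F, ball v (1 / 8 : ℝ)) := hsum
        _ ≤ volume (ball (0 : E) (9 / 8)) := measure_mono hsub
        _ = _ := h9
    have key2 : (F.card : ENNReal) * ENNReal.ofReal ((1 / 8 : ℝ) ^ m)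
        ≤ ENNReal.ofReal ((9 / 8 : ℝ) ^ m) :=
      (ENNReal.mul_le_mul_iff_left hV0 hVt).mp key
    have h18 : (0:ℝ) ≤ (1 / 8 : ℝ) ^ m := by positivity
    rw [show (F.card : ENNReal) = ENNReal.ofReal (F.card : ℝ) by
          rw [ENNReal.ofReal_natCast],
        ← ENNReal.ofReal_mul (by positivity)] at key2
    have key3 : (F.card : ℝ) * (1 / 8 : ℝ) ^ m ≤ (9 / 8 : ℝ) ^ m :=
      (ENNReal.ofReal_le_ofReal_iff (by positivity)).mp key2
    have h98 : ((9 : ℝ) / 8) ^ m = 9 ^ m * (1 / 8 : ℝ) ^ m := by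
      rw [← mul_pow]; norm_num
    have : (F.card : ℝ) ≤ 9 ^ m := by
      have h8 : (0:ℝ) < (1 / 8 : ℝ) ^ m := by positivity
      nlinarith [key3]
    exact_mod_cast this
  -- choose a maximal separated set
  have hP0 : P ∅ := ⟨by simp, by simp⟩
  set Q : ℕ → Prop := fun c => ∃ F : Finset E, P F ∧ F.card = c with hQ
  have hQ0 : Q 0 := ⟨∅, hP0, by simp⟩
  obtain ⟨F, hF, hFc⟩ : Q (Nat.findGreatest Q (9 ^ m)) :=
    Nat.findGreatest_spec (Nat.zero_le _) hQ0
  refine ⟨F, hFc ▸ Nat.findGreatest_le _, hF.1, ?_⟩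
  intro x hx
  by_contra hnot
  push_neg at hnot
  have hxF : x ∉ F := fun hxF => by
    have := hnot x hxF
    norm_num at this
  have hins : P (insert x F) := by
    constructor
    · intro v hv
      rcases Finset.mem_insert.mp hv with h | h
      · rw [h]; exact hx
      · exact hF.1 v h
    · rw [Finset.coe_insert]
      refine Set.Pairwise.insert hF.2 ?_
      intro v hv hvx
      exact ⟨hnot v hv, by rw [dist_comm]; exact hnot v hv⟩
  have hle : F.card + 1 ≤ Nat.findGreatest Q (9 ^ m) :=
    Nat.le_findGreatest (by
      have := hcard _ hins
      rwa [Finset.card_insert_of_notMem hxF] at this)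
      ⟨insert x F, hins, Finset.card_insert_of_notMem hxF⟩
  omega

lemma sum_dite_equiv {p m : ℕ} (S : Finset (Fin p)) (e : Fin m ≃ {x // x ∈ S})
    (F : Fin m → ℝ) :
    (∑ i : Fin p, if h : i ∈ S then F (e.symm ⟨i, h⟩) else 0) = ∑ j, F j := by
  classical
  rw [← Finset.sum_subset (Finset.subset_univ S) (fun i _ hi => by simp [hi])]
  rw [← Finset.sum_attach S fun i => if h : i ∈ S then F (e.symm ⟨i, h⟩) else 0]
  rw [← e.symm.sum_comp fun j => F j]
  apply Finset.sum_congr rfl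
  intro x _
  simp [x.2]

lemma euclid_norm_sq {m : ℕ} (v : EuclideanSpace ℝ (Fin m)) (hv : ‖v‖ = 1) :
    (∑ j, (v j) ^ 2) = 1 := by
  have := EuclideanSpace.norm_eq v
  rw [hv] at this
  have h2 : Real.sqrt (∑ j, ‖v j‖ ^ 2) = 1 := this.symm
  have h3 : (∑ j, ‖v j‖ ^ 2) = 1 := by
    have hnn : (0:ℝ) ≤ ∑ j, ‖v j‖ ^ 2 := Finset.sum_nonneg fun j _ => sq_nonneg _
    nlinarith [Real.sq_sqrt hnn]
  rw [← h3]
  exact Finset.sum_congr rfl fun j _ => (sq_abs (v j)).symm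

lemma support_net {p : ℕ} (m : ℕ) (hm : 1 ≤ m) (S : Finset (Fin p)) (hS : S.card = m) :
    ∃ N : Finset (Fin p → ℝ), N.card ≤ 9 ^ m ∧
      (∀ v ∈ N, (∑ i, (v i) ^ 2) = 1) ∧ (∀ v ∈ N, ∀ i ∉ S, v i = 0) ∧
      ∀ u : Fin p → ℝ, (∑ i, (u i) ^ 2) = 1 → (∀ i ∉ S, u i = 0) →
        ∃ v ∈ N, (∑ i, (u i - v i) ^ 2) ≤ 1 / 16 := by
  classical
  obtain ⟨N₀, hcard, hunit, hcover⟩ := sphere_net m hm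
  set e : Fin m ≃ {x // x ∈ S} := (S.equivFinOfCardEq hS).symm with he
  set ι : EuclideanSpace ℝ (Fin m) → (Fin p → ℝ) :=
    fun v i => if h : i ∈ S then v (e.symm ⟨i, h⟩) else 0 with hι
  refine ⟨N₀.image ι, le_trans Finset.card_image_le hcard, ?_, ?_, ?_⟩
  · intro w hw
    obtain ⟨v, hv, rfl⟩ := Finset.mem_image.mp hw
    have : (∑ i : Fin p, (ι v i) ^ 2) = ∑ j, (v j) ^ 2 := by
      rw [← sum_dite_equiv S e fun j => (v j) ^ 2]
      apply Finset.sum_congr rfl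
      intro i _
      by_cases h : i ∈ S <;> simp [hι, h]
    rw [this]
    exact euclid_norm_sq v (hunit v hv)
  · intro w hw i hi
    obtain ⟨v, hv, rfl⟩ := Finset.mem_image.mp hw
    simp [hι, hi]
  · intro u hu hus
    set ρ : EuclideanSpace ℝ (Fin m) := WithLp.toLp 2 (fun j => u ↑(e j)) with hρ
    have hρu : ∀ (i : Fin p) (h : i ∈ S), ρ (e.symm ⟨i, h⟩) = u i := by
      intro i h
      simp only [hρ, PiLp.toLp_apply]
      congr 1
      rw [Equiv.apply_symm_apply]
    have hρnorm : ‖ρ‖ = 1 := by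
      have h1 : (∑ j, ‖ρ j‖ ^ 2) = 1 := by
        have h2 : (∑ j, ‖ρ j‖ ^ 2) = ∑ j, (ρ j) ^ 2 :=
          Finset.sum_congr rfl fun j _ => sq_abs (ρ j)
        rw [h2]
        have h3 : (∑ j, (ρ j) ^ 2) = ∑ i : Fin p, (u i) ^ 2 := by
          rw [← sum_dite_equiv S e fun j => (ρ j) ^ 2]
          apply Finset.sum_congr rfl
          intro i _
          by_cases h : i ∈ S
          · simp only [h, dif_pos]
            rw [hρu i h]
          · simp [h, hus i h]
        rw [h3, hu]
      rw [EuclideanSpace.norm_eq, h1, Real.sqrt_one]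
    obtain ⟨v, hvN, hvd⟩ := hcover ρ hρnorm
    refine ⟨ι v, Finset.mem_image_of_mem ι hvN, ?_⟩
    have hdist : (∑ j, (ρ j - v j) ^ 2) ≤ 1 / 16 := by
      have h1 : dist ρ v = Real.sqrt (∑ j, (ρ j - v j) ^ 2) := by
        rw [EuclideanSpace.dist_eq]
        congr 1
        exact Finset.sum_congr rfl fun j _ => by rw [Real.dist_eq, sq_abs]
      have hnn : (0:ℝ) ≤ ∑ j, (ρ j - v j) ^ 2 := Finset.sum_nonneg fun j _ => sq_nonneg _
      have h2 : Real.sqrt (∑ j, (ρ j - v j) ^ 2) ≤ 1 / 4 := h1 ▸ hvd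
      nlinarith [Real.sq_sqrt hnn, Real.sqrt_nonneg (∑ j, (ρ j - v j) ^ 2)]
    calc (∑ i, (u i - ι v i) ^ 2) = ∑ j, (ρ j - v j) ^ 2 := by
          rw [← sum_dite_equiv S e fun j => (ρ j - v j) ^ 2]
          apply Finset.sum_congr rfl
          intro i _
          by_cases h : i ∈ S
          · simp only [h, dif_pos, hι]
            rw [hρu i h]
          · simp [hι, h, hus i h]
      _ ≤ 1 / 16 := hdist

end AuxNet

section AuxDet

section QF
variable {p : ℕ} (M : Matrix (Fin p) (Fin p) ℝ)

lemma q_smul (a : ℝ) (w : Fin p → ℝ) :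
    (a • w) ⬝ᵥ M.mulVec (a • w) = a ^ 2 * (w ⬝ᵥ M.mulVec w) := by
  rw [Matrix.mulVec_smul, dotProduct_smul, smul_dotProduct]
  simp [smul_eq_mul]; ring

lemma q_polar (x y : Fin p → ℝ) :
    (x + y) ⬝ᵥ M.mulVec (x + y) - (x - y) ⬝ᵥ M.mulVec (x - y)
      = 2 * (x ⬝ᵥ M.mulVec y + y ⬝ᵥ M.mulVec x) := by
  simp only [Matrix.mulVec_add, Matrix.mulVec_sub, dotProduct_add, add_dotProduct,
    dotProduct_sub, sub_dotProduct]
  ring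

lemma B_smul_left (a : ℝ) (x y : Fin p → ℝ) :
    ((a • x) ⬝ᵥ M.mulVec y + y ⬝ᵥ M.mulVec (a • x))
      = a * (x ⬝ᵥ M.mulVec y + y ⬝ᵥ M.mulVec x) := by
  rw [Matrix.mulVec_smul, dotProduct_smul, smul_dotProduct]
  simp [smul_eq_mul]; ring

lemma B_smul_right (a : ℝ) (x y : Fin p → ℝ) :
    (x ⬝ᵥ M.mulVec (a • y) + (a • y) ⬝ᵥ M.mulVec x)
      = a * (x ⬝ᵥ M.mulVec y + y ⬝ᵥ M.mulVec x) := by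
  rw [Matrix.mulVec_smul, dotProduct_smul, smul_dotProduct]
  simp [smul_eq_mul]; ring

lemma q_abs_le (u : Fin p → ℝ) (hu : (∑ i, (u i) ^ 2) = 1) :
    |u ⬝ᵥ M.mulVec u| ≤ ∑ i, ∑ j, |M i j| := by
  have habs : ∀ i, |u i| ≤ 1 := by
    intro i
    have h1 : (u i) ^ 2 ≤ 1 := by
      rw [← hu]
      exact Finset.single_le_sum (fun j _ => sq_nonneg (u j)) (Finset.mem_univ i)
    nlinarith [abs_nonneg (u i), sq_abs (u i)]
  calc |u ⬝ᵥ M.mulVec u| = |∑ i, u i * ∑ j, M i j * u j| := by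
        simp [dotProduct, Matrix.mulVec]
    _ ≤ ∑ i, |u i * ∑ j, M i j * u j| := Finset.abs_sum_le_sum_abs _ _
    _ ≤ ∑ i, ∑ j, |M i j| := by
        apply Finset.sum_le_sum
        intro i _
        rw [abs_mul]
        calc |u i| * |∑ j, M i j * u j| ≤ 1 * ∑ j, |M i j * u j| :=
              mul_le_mul (habs i) (Finset.abs_sum_le_sum_abs _ _) (abs_nonneg _)
                zero_le_one
          _ = ∑ j, |M i j| * |u j| := by
                rw [one_mul]
                exact Finset.sum_congr rfl fun j _ => abs_mul _ _
          _ ≤ ∑ j, |M i j| := Finset.sum_le_sum fun j _ => by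
              nlinarith [habs j, abs_nonneg (M i j)]

end QF

/-- Deterministic net argument. -/
lemma det_bound {p : ℕ} (M : Matrix (Fin p) (Fin p) ℝ) (S : Finset (Fin p))
    (N : Finset (Fin p → ℝ)) (b : ℝ) (hb : 0 ≤ b)
    (hNbd : ∀ v ∈ N, |v ⬝ᵥ M.mulVec v| ≤ b)
    (hNunit : ∀ v ∈ N, (∑ i, (v i) ^ 2) = 1)
    (hNsupp : ∀ v ∈ N, ∀ i ∉ S, v i = 0)
    (hcover : ∀ u : Fin p → ℝ, (∑ i, (u i) ^ 2) = 1 → (∀ i ∉ S, u i = 0) →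
      ∃ v ∈ N, (∑ i, (u i - v i) ^ 2) ≤ 1 / 16) :
    ∀ u : Fin p → ℝ, (∑ i, (u i) ^ 2) = 1 → (∀ i ∉ S, u i = 0) →
      |u ⬝ᵥ M.mulVec u| ≤ 2 * b := by
  classical
  intro u hu hus
  set T : Set ℝ := {x | ∃ w : Fin p → ℝ, (∑ i, (w i) ^ 2) = 1 ∧ (∀ i ∉ S, w i = 0) ∧
    x = |w ⬝ᵥ M.mulVec w|} with hT
  have hTne : T.Nonempty := ⟨_, u, hu, hus, rfl⟩
  have hTbdd : BddAbove T := by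
    refine ⟨∑ i, ∑ j, |M i j|, ?_⟩
    rintro x ⟨w, hw, -, rfl⟩
    exact q_abs_le M w hw
  set Q := sSup T with hQ
  have hQmem : ∀ x ∈ T, x ≤ Q := fun x hx => le_csSup hTbdd hx
  have hQ0 : 0 ≤ Q := le_trans (abs_nonneg _) (hQmem _ ⟨u, hu, hus, rfl⟩)
  -- quadratic bound
  have hquad : ∀ w : Fin p → ℝ, (∀ i ∉ S, w i = 0) →
      |w ⬝ᵥ M.mulVec w| ≤ Q * ∑ i, (w i) ^ 2 := by
    intro w hw
    rcases eq_or_lt_of_le (Finset.sum_nonneg fun i _ => sq_nonneg (w i)) with h0 | h0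
    · have hw0 : w = 0 := by
        funext i
        have : (w i) ^ 2 = 0 := by
          have := Finset.sum_eq_zero_iff_of_nonneg (fun j (_ : j ∈ Finset.univ) =>
            sq_nonneg (w j)) |>.mp h0.symm i (Finset.mem_univ i)
          exact this
        exact pow_eq_zero_iff (n := 2) (by norm_num) |>.mp this
      simp [hw0]
    · set c := Real.sqrt (∑ i, (w i) ^ 2) with hc
      have hc0 : 0 < c := Real.sqrt_pos.mpr h0
      have hc2 : c ^ 2 = ∑ i, (w i) ^ 2 := Real.sq_sqrt h0.le
      have hw' : (∑ i, ((c⁻¹ • w) i) ^ 2) = 1 := by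
        simp only [Pi.smul_apply, smul_eq_mul, mul_pow]
        rw [← Finset.mul_sum, ← hc2]
        field_simp
      have hws' : ∀ i ∉ S, (c⁻¹ • w) i = 0 := fun i hi => by
        simp [hw i hi]
      have hmem : |(c⁻¹ • w) ⬝ᵥ M.mulVec (c⁻¹ • w)| ∈ T := ⟨_, hw', hws', rfl⟩
      have := hQmem _ hmem
      rw [q_smul] at this
      have h2 : |(c ^ 2)⁻¹| * |w ⬝ᵥ M.mulVec w| ≤ Q := by
        rw [← abs_mul, ← inv_pow]; exact this
      have h3 : |(c ^ 2)⁻¹| = (c ^ 2)⁻¹ := abs_of_pos (by positivity)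
      rw [h3] at h2
      calc |w ⬝ᵥ M.mulVec w| = c ^ 2 * ((c ^ 2)⁻¹ * |w ⬝ᵥ M.mulVec w|) := by
            field_simp
        _ ≤ c ^ 2 * Q := by
            apply mul_le_mul_of_nonneg_left h2 (by positivity)
        _ = Q * ∑ i, (w i) ^ 2 := by rw [hc2]; ring
  -- bilinear bound
  have hbil : ∀ x y : Fin p → ℝ, (∀ i ∉ S, x i = 0) → (∀ i ∉ S, y i = 0) →
      |x ⬝ᵥ M.mulVec y + y ⬝ᵥ M.mulVec x|
        ≤ 2 * Q * Real.sqrt (∑ i, (x i) ^ 2) * Real.sqrt (∑ i, (y i) ^ 2) := by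
    intro x y hx hy
    have hpolar : ∀ x' y' : Fin p → ℝ, (∀ i ∉ S, x' i = 0) → (∀ i ∉ S, y' i = 0) →
        |x' ⬝ᵥ M.mulVec y' + y' ⬝ᵥ M.mulVec x'|
          ≤ Q * ((∑ i, (x' i) ^ 2) + ∑ i, (y' i) ^ 2) := by
      intro x' y' hx' hy'
      have heq := q_polar M x' y'
      have h1 : |(x' + y') ⬝ᵥ M.mulVec (x' + y')| ≤ Q * ∑ i, ((x' + y') i) ^ 2 :=
        hquad _ (fun i hi => by simp [hx' i hi, hy' i hi])
      have h2 : |(x' - y') ⬝ᵥ M.mulVec (x' - y')| ≤ Q * ∑ i, ((x' - y') i) ^ 2 :=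
        hquad _ (fun i hi => by simp [hx' i hi, hy' i hi])
      have hpar : (∑ i, ((x' + y') i) ^ 2) + (∑ i, ((x' - y') i) ^ 2)
          = 2 * ((∑ i, (x' i) ^ 2) + ∑ i, (y' i) ^ 2) := by
        rw [← Finset.sum_add_distrib]
        rw [show (∑ i, (((x' + y') i) ^ 2 + ((x' - y') i) ^ 2))
            = ∑ i, 2 * ((x' i) ^ 2 + (y' i) ^ 2) from
          Finset.sum_congr rfl fun i _ => by simp only [Pi.add_apply, Pi.sub_apply]; ring]
        rw [← Finset.mul_sum, Finset.sum_add_distrib]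
      have := abs_sub_abs_le_abs_sub ((x' + y') ⬝ᵥ M.mulVec (x' + y'))
        ((x' - y') ⬝ᵥ M.mulVec (x' - y'))
      have habs : |x' ⬝ᵥ M.mulVec y' + y' ⬝ᵥ M.mulVec x'|
          = |(x' + y') ⬝ᵥ M.mulVec (x' + y') - (x' - y') ⬝ᵥ M.mulVec (x' - y')| / 2 := by
        rw [heq, abs_mul]
        norm_num
      rw [habs]
      rw [div_le_iff₀ (by norm_num : (0:ℝ) < 2)]
      calc |(x' + y') ⬝ᵥ M.mulVec (x' + y') - (x' - y') ⬝ᵥ M.mulVec (x' - y')|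
          ≤ |(x' + y') ⬝ᵥ M.mulVec (x' + y')| + |(x' - y') ⬝ᵥ M.mulVec (x' - y')| :=
            abs_sub _ _
        _ ≤ Q * (∑ i, ((x' + y') i) ^ 2) + Q * (∑ i, ((x' - y') i) ^ 2) := add_le_add h1 h2
        _ = Q * ((∑ i, (x' i) ^ 2) + ∑ i, (y' i) ^ 2) * 2 := by
            rw [← mul_add, hpar]; ring
    -- scale to unit
    by_cases hx0 : (∑ i, (x i) ^ 2) = 0
    · have : x = 0 := by
        funext i
        exact pow_eq_zero_iff (n := 2) (by norm_num) |>.mp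
          ((Finset.sum_eq_zero_iff_of_nonneg fun j _ => sq_nonneg (x j)).mp hx0 i
            (Finset.mem_univ i))
      simp [this]
    by_cases hy0 : (∑ i, (y i) ^ 2) = 0
    · have : y = 0 := by
        funext i
        exact pow_eq_zero_iff (n := 2) (by norm_num) |>.mp
          ((Finset.sum_eq_zero_iff_of_nonneg fun j _ => sq_nonneg (y j)).mp hy0 i
            (Finset.mem_univ i))
      simp [this]
    have hxpos : 0 < ∑ i, (x i) ^ 2 :=
      lt_of_le_of_ne (Finset.sum_nonneg fun i _ => sq_nonneg _) (Ne.symm hx0)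
    have hypos : 0 < ∑ i, (y i) ^ 2 :=
      lt_of_le_of_ne (Finset.sum_nonneg fun i _ => sq_nonneg _) (Ne.symm hy0)
    set a := Real.sqrt (∑ i, (x i) ^ 2) with ha
    set c := Real.sqrt (∑ i, (y i) ^ 2) with hcc
    have ha0 : 0 < a := Real.sqrt_pos.mpr hxpos
    have hc0 : 0 < c := Real.sqrt_pos.mpr hypos
    have ha2 : a ^ 2 = ∑ i, (x i) ^ 2 := Real.sq_sqrt hxpos.le
    have hc2 : c ^ 2 = ∑ i, (y i) ^ 2 := Real.sq_sqrt hypos.le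
    have hxunit : (∑ i, ((a⁻¹ • x) i) ^ 2) = 1 := by
      simp only [Pi.smul_apply, smul_eq_mul, mul_pow]
      rw [← Finset.mul_sum, ← ha2]; field_simp
    have hyunit : (∑ i, ((c⁻¹ • y) i) ^ 2) = 1 := by
      simp only [Pi.smul_apply, smul_eq_mul, mul_pow]
      rw [← Finset.mul_sum, ← hc2]; field_simp
    have := hpolar (a⁻¹ • x) (c⁻¹ • y) (fun i hi => by simp [hx i hi])
      (fun i hi => by simp [hy i hi])
    rw [hxunit, hyunit] at this
    rw [B_smul_left, B_smul_right, abs_mul, abs_mul,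
      abs_of_pos (inv_pos.mpr ha0), abs_of_pos (inv_pos.mpr hc0)] at this
    have h4 : a⁻¹ * (c⁻¹ * |x ⬝ᵥ M.mulVec y + y ⬝ᵥ M.mulVec x|) ≤ Q * 2 := by
      calc a⁻¹ * (c⁻¹ * |x ⬝ᵥ M.mulVec y + y ⬝ᵥ M.mulVec x|)
          ≤ Q * (1 + 1) := this
        _ = Q * 2 := by ring
    calc |x ⬝ᵥ M.mulVec y + y ⬝ᵥ M.mulVec x|
        = a * c * (a⁻¹ * (c⁻¹ * |x ⬝ᵥ M.mulVec y + y ⬝ᵥ M.mulVec x|)) := by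
          field_simp
      _ ≤ a * c * (Q * 2) := by
          apply mul_le_mul_of_nonneg_left h4 (by positivity)
      _ = 2 * Q * a * c := by ring
  -- self improvement
  have hself : ∀ x ∈ T, x ≤ b + Q / 2 := by
    rintro x ⟨w, hw, hws, rfl⟩
    obtain ⟨v, hvN, hvdist⟩ := hcover w hw hws
    have hvb := hNbd v hvN
    have hvu := hNunit v hvN
    have hvs := hNsupp v hvN
    have hdiff : |w ⬝ᵥ M.mulVec w - v ⬝ᵥ M.mulVec v| ≤ Q / 2 := by
      have heq : w ⬝ᵥ M.mulVec w - v ⬝ᵥ M.mulVec v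
          = ((w + v) ⬝ᵥ M.mulVec (w - v) + (w - v) ⬝ᵥ M.mulVec (w + v)) / 2 := by
        simp only [Matrix.mulVec_add, Matrix.mulVec_sub, dotProduct_add, add_dotProduct,
          dotProduct_sub, sub_dotProduct]
        ring
      rw [heq]
      have := hbil (w + v) (w - v) (fun i hi => by simp [hws i hi, hvs i hi])
        (fun i hi => by simp [hws i hi, hvs i hi])
      have hwv1 : Real.sqrt (∑ i, ((w + v) i) ^ 2) ≤ 2 := by
        have hs4 : (∑ i, ((w + v) i) ^ 2) ≤ 4 := by
          have : ∀ i, ((w + v) i) ^ 2 ≤ 2 * (w i) ^ 2 + 2 * (v i) ^ 2 := fun i => by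
            simp only [Pi.add_apply]; nlinarith [sq_nonneg (w i - v i)]
          calc (∑ i, ((w + v) i) ^ 2) ≤ ∑ i, (2 * (w i) ^ 2 + 2 * (v i) ^ 2) :=
                Finset.sum_le_sum fun i _ => this i
            _ = 2 * (∑ i, (w i) ^ 2) + 2 * ∑ i, (v i) ^ 2 := by
                rw [Finset.sum_add_distrib, ← Finset.mul_sum, ← Finset.mul_sum]
            _ = 4 := by rw [hw, hvu]; norm_num
        calc Real.sqrt (∑ i, ((w + v) i) ^ 2) ≤ Real.sqrt 4 := Real.sqrt_le_sqrt hs4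
          _ = 2 := by rw [show (4:ℝ) = 2^2 by norm_num, Real.sqrt_sq (by norm_num)]
      have hwv2 : Real.sqrt (∑ i, ((w - v) i) ^ 2) ≤ 1 / 4 := by
        have heq2 : (∑ i, ((w - v) i) ^ 2) = ∑ i, (w i - v i) ^ 2 := by
          exact Finset.sum_congr rfl fun i _ => by simp
        calc Real.sqrt (∑ i, ((w - v) i) ^ 2) ≤ Real.sqrt (1 / 16) := by
              rw [heq2]; exact Real.sqrt_le_sqrt hvdist
          _ = 1 / 4 := by
              rw [show (1:ℝ)/16 = (1/4)^2 by norm_num, Real.sqrt_sq (by norm_num)]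
      rw [abs_div]
      rw [div_le_iff₀ (by norm_num : (0:ℝ) < |2|)]
      calc |(w + v) ⬝ᵥ M.mulVec (w - v) + (w - v) ⬝ᵥ M.mulVec (w + v)|
          ≤ 2 * Q * Real.sqrt (∑ i, ((w + v) i) ^ 2) * Real.sqrt (∑ i, ((w - v) i) ^ 2) :=
            this
        _ ≤ 2 * Q * 2 * (1/4) := by
            have h1 : 2 * Q * Real.sqrt (∑ i, ((w + v) i) ^ 2) ≤ 2 * Q * 2 := by
              apply mul_le_mul_of_nonneg_left hwv1 (by positivity)
            have h2 : (0:ℝ) ≤ Real.sqrt (∑ i, ((w - v) i) ^ 2) := Real.sqrt_nonneg _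
            nlinarith [Real.sqrt_nonneg (∑ i, ((w + v) i) ^ 2), hQ0]
        _ = Q / 2 * |2| := by rw [abs_of_pos (by norm_num : (0:ℝ) < 2)]; ring
    calc |w ⬝ᵥ M.mulVec w| ≤ |v ⬝ᵥ M.mulVec v| + |w ⬝ᵥ M.mulVec w - v ⬝ᵥ M.mulVec v| := by
          have := abs_add_le (v ⬝ᵥ M.mulVec v) (w ⬝ᵥ M.mulVec w - v ⬝ᵥ M.mulVec v)
          simpa using this
      _ ≤ b + Q / 2 := add_le_add hvb hdiff
  have hQle : Q ≤ b + Q / 2 := csSup_le hTne hself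
  have hQ2b : Q ≤ 2 * b := by linarith
  exact le_trans (hQmem _ ⟨u, hu, hus, rfl⟩) hQ2b

end AuxDet

section AuxCher

lemma chernoff_abs {Ω : Type*} [MeasurableSpace Ω] (μ : Measure Ω) [IsProbabilityMeasure μ]
    (X : Ω → ℝ) (hX : Measurable X) (t ε K : ℝ) (ht : 0 ≤ t)
    (hip : Integrable (fun ω => Real.exp (t * X ω)) μ)
    (him : Integrable (fun ω => Real.exp (-t * X ω)) μ)
    (hpmgf : ∫ ω, Real.exp (t * X ω) ∂μ ≤ Real.exp K)
    (hmmgf : ∫ ω, Real.exp (-t * X ω) ∂μ ≤ Real.exp K) :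
    μ {ω | ε < |X ω|} ≤ ENNReal.ofReal (2 * Real.exp (-t * ε + K)) := by
  have hsub : {ω | ε < |X ω|} ⊆ {ω | ε ≤ X ω} ∪ {ω | ε ≤ -X ω} := by
    intro ω hω
    simp only [Set.mem_setOf_eq] at hω
    rcases abs_cases (X ω) with ⟨h, _⟩ | ⟨h, _⟩
    · left; exact le_of_lt (h ▸ hω)
    · right; simp only [Set.mem_setOf_eq]; linarith [h ▸ hω]
  have hup : μ {ω | ε ≤ X ω} ≤ ENNReal.ofReal (Real.exp (-t * ε + K)) := by
    have h1 := measure_ge_le_exp_mul_mgf (X := X) (μ := μ) (t := t) ε ht hip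
    have h2 : mgf X μ t = ∫ ω, Real.exp (t * X ω) ∂μ := rfl
    rw [ENNReal.le_ofReal_iff_toReal_le (measure_ne_top μ _) (by positivity)]
    calc (μ {ω | ε ≤ X ω}).toReal ≤ Real.exp (-t * ε) * mgf X μ t := h1
      _ ≤ Real.exp (-t * ε) * Real.exp K := by
          rw [h2]; exact mul_le_mul_of_nonneg_left hpmgf (by positivity)
      _ = Real.exp (-t * ε + K) := by rw [← Real.exp_add]
  have hlo : μ {ω | ε ≤ -X ω} ≤ ENNReal.ofReal (Real.exp (-t * ε + K)) := by
    have him' : Integrable (fun ω => Real.exp (t * (-X) ω)) μ := by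
      simpa [mul_neg, neg_mul] using him
    have h1 := measure_ge_le_exp_mul_mgf (X := fun ω => -X ω) (μ := μ) (t := t) ε ht him'
    have h2 : mgf (fun ω => -X ω) μ t = ∫ ω, Real.exp (-t * X ω) ∂μ := by
      unfold mgf
      congr 1
      funext ω
      ring_nf
    rw [ENNReal.le_ofReal_iff_toReal_le (measure_ne_top μ _) (by positivity)]
    calc (μ {ω | ε ≤ -X ω}).toReal ≤ Real.exp (-t * ε) * mgf (fun ω => -X ω) μ t := h1
      _ ≤ Real.exp (-t * ε) * Real.exp K := by
          rw [h2]; exact mul_le_mul_of_nonneg_left hmmgf (by positivity)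
      _ = Real.exp (-t * ε + K) := by rw [← Real.exp_add]
  calc μ {ω | ε < |X ω|} ≤ μ ({ω | ε ≤ X ω} ∪ {ω | ε ≤ -X ω}) := measure_mono hsub
    _ ≤ μ {ω | ε ≤ X ω} + μ {ω | ε ≤ -X ω} := measure_union_le _ _
    _ ≤ ENNReal.ofReal (Real.exp (-t * ε + K)) + ENNReal.ofReal (Real.exp (-t * ε + K)) :=
        add_le_add hup hlo
    _ = ENNReal.ofReal (2 * Real.exp (-t * ε + K)) := by
        rw [← ENNReal.ofReal_add (by positivity) (by positivity)]; ring_nf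

end AuxCher

/-- Lemma F.2: if the random matrix `A` satisfies the uniform MGF bound
`E[exp{t·uᵀAu}] ≤ exp(c₁t²/n)` for all `|t| ≤ c₀n` and unit `u`, then with probability at
least `1 − δ`, `|uᵀAu| ≤ √((16c₁/n)(log(2/δ) + k log(12p)))` for all `k`-sparse unit `u`. -/
theorem stmt8 {Ω : Type*} [MeasurableSpace Ω] (μ : Measure Ω) [IsProbabilityMeasure μ]
    (p n k : ℕ) (hp : 1 ≤ p) (hn : 1 ≤ n) (hk : 1 ≤ k)
    (A : Ω → Matrix (Fin p) (Fin p) ℝ) (hmeas : ∀ i j, Measurable fun ω => A ω i j)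
    (c₀ c₁ : ℝ) (hc₀ : 0 < c₀) (hc₁ : 0 < c₁)
    (hint : ∀ (t : ℝ) (u : Fin p → ℝ),
      Integrable (fun ω => Real.exp (t * (u ⬝ᵥ (A ω).mulVec u))) μ)
    (hmgf : ∀ t : ℝ, |t| ≤ c₀ * n → ∀ u : Fin p → ℝ, (∑ i, (u i) ^ 2) = 1 →
      ∫ ω, Real.exp (t * (u ⬝ᵥ (A ω).mulVec u)) ∂μ ≤ Real.exp (c₁ * t ^ 2 / n))
    (δ : ℝ) (hδ : δ ∈ Set.Ioo (0 : ℝ) 1)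
    (hcond : Real.log (2 / δ) + k * Real.log (12 * p) ≤ n * c₀ ^ 2 * c₁) :
    ENNReal.ofReal (1 - δ) ≤
      μ {ω | ∀ u : Fin p → ℝ, (∑ i, (u i) ^ 2) = 1 → kSparse k u →
        |u ⬝ᵥ (A ω).mulVec u|
          ≤ Real.sqrt ((16 * c₁ / n) * (Real.log (2 / δ) + k * Real.log (12 * p)))} := by
  classical
  obtain ⟨hδ0, hδ1⟩ := hδ
  set m := min k p with hmdef
  have hm1 : 1 ≤ m := le_min hk hp
  have hmp : m ≤ p := min_le_right _ _
  have hmk : m ≤ k := min_le_left _ _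
  have hp0 : (0:ℝ) < p := by exact_mod_cast hp
  have hn0 : (0:ℝ) < n := by exact_mod_cast hn
  set L := Real.log (2 / δ) + k * Real.log (12 * p) with hLdef
  have hlog1 : 0 < Real.log (2 / δ) :=
    Real.log_pos (by rw [lt_div_iff₀ hδ0]; linarith)
  have hp1 : (1:ℝ) ≤ p := by exact_mod_cast hp
  have hlog2 : 0 ≤ Real.log (12 * p) := Real.log_nonneg (by nlinarith)
  have hL0 : 0 < L :=
    add_pos_of_pos_of_nonneg hlog1 (mul_nonneg (Nat.cast_nonneg k) hlog2)
  set s := Real.sqrt ((16 * c₁ / n) * L) with hsdef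
  have hs0 : 0 < s := Real.sqrt_pos.mpr (by positivity)
  have hs2 : s ^ 2 = (16 * c₁ / n) * L := Real.sq_sqrt (by positivity)
  set t := n * s / (4 * c₁) with htdef
  have ht0 : 0 ≤ t := by positivity
  have htc : |t| ≤ c₀ * n := by
    have hts : s ≤ 4 * c₀ * c₁ := by
      have h1 : (16 * c₁ / n) * L ≤ (4 * c₀ * c₁) ^ 2 := by
        rw [div_mul_eq_mul_div, div_le_iff₀ hn0]
        nlinarith [hcond]
      calc s ≤ Real.sqrt ((4 * c₀ * c₁) ^ 2) := Real.sqrt_le_sqrt h1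
        _ = 4 * c₀ * c₁ := Real.sqrt_sq (by positivity)
    rw [abs_of_nonneg ht0, htdef, div_le_iff₀ (by positivity : (0:ℝ) < 4 * c₁)]
    nlinarith
  have hns2 : n * s ^ 2 = 16 * c₁ * L := by
    rw [hs2]; field_simp
  have hexp : -t * (s / 2) + c₁ * t ^ 2 / n = -L := by
    rw [htdef]
    field_simp
    linear_combination (-2) * hns2
  have h2exp : 2 * Real.exp (-L) = δ / (12 * p : ℝ) ^ k := by
    rw [hLdef, neg_add, Real.exp_add, Real.exp_neg, Real.exp_neg,
      Real.exp_log (by positivity : (0:ℝ) < 2 / δ), ← Real.log_pow,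
      Real.exp_log (by positivity : (0:ℝ) < (12 * p : ℝ) ^ k)]
    field_simp
  -- measurability of quadratic forms
  have hqmeas : ∀ v : Fin p → ℝ, Measurable fun ω => v ⬝ᵥ (A ω).mulVec v := by
    intro v
    show Measurable fun ω => ∑ i, v i * ∑ j, A ω i j * v j
    apply Finset.measurable_sum
    intro i _
    apply Measurable.const_mul
    apply Finset.measurable_sum
    intro j _
    exact (hmeas i j).mul_const _
  -- the total net
  set 𝒮 := (Finset.univ : Finset (Fin p)).powersetCard m with h𝒮
  have hnetex : ∀ S : Finset (Fin p), ∃ N : Finset (Fin p → ℝ),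
      S.card = m → (N.card ≤ 9 ^ m ∧
        (∀ v ∈ N, (∑ i, (v i) ^ 2) = 1) ∧ (∀ v ∈ N, ∀ i ∉ S, v i = 0) ∧
        ∀ u : Fin p → ℝ, (∑ i, (u i) ^ 2) = 1 → (∀ i ∉ S, u i = 0) →
          ∃ v ∈ N, (∑ i, (u i - v i) ^ 2) ≤ 1 / 16) := by
    intro S
    by_cases h : S.card = m
    · obtain ⟨N, h1, h2, h3, h4⟩ := support_net m hm1 S h
      exact ⟨N, fun _ => ⟨h1, h2, h3, h4⟩⟩
    · exact ⟨∅, fun hc => absurd hc h⟩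
  choose NS hNS using hnetex
  set NetTot := 𝒮.biUnion NS with hNetTot
  have hcardS : ∀ S ∈ 𝒮, S.card = m := fun S hS => (Finset.mem_powersetCard.mp hS).2
  have hNetCard : (NetTot.card : ℝ) ≤ (12 * p : ℝ) ^ k := by
    have h1 : NetTot.card ≤ ∑ S ∈ 𝒮, (NS S).card := Finset.card_biUnion_le
    have h2 : ∑ S ∈ 𝒮, (NS S).card ≤ 𝒮.card * 9 ^ m :=
      Finset.sum_le_card_nsmul 𝒮 _ (9 ^ m) fun S hS => (hNS S (hcardS S hS)).1
    have h3 : 𝒮.card = p.choose m := by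
      rw [h𝒮, Finset.card_powersetCard, Finset.card_univ, Fintype.card_fin]
    have h4 : NetTot.card ≤ p ^ k * 12 ^ k := by
      calc NetTot.card ≤ 𝒮.card * 9 ^ m := le_trans h1 h2
        _ = p.choose m * 9 ^ m := by rw [h3]
        _ ≤ p ^ m * 9 ^ m := Nat.mul_le_mul_right _ (Nat.choose_le_pow p m)
        _ ≤ p ^ k * 12 ^ k := Nat.mul_le_mul
            (Nat.pow_le_pow_right hp hmk)
            (le_trans (Nat.pow_le_pow_left (by norm_num) m)
              (Nat.pow_le_pow_right (by norm_num) hmk))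
    calc (NetTot.card : ℝ) ≤ ((p ^ k * 12 ^ k : ℕ) : ℝ) := by exact_mod_cast h4
      _ = (12 * p : ℝ) ^ k := by push_cast; ring
  -- all net elements are unit vectors
  have hNetUnit : ∀ v ∈ NetTot, (∑ i, (v i) ^ 2) = 1 := by
    intro v hv
    obtain ⟨S, hS, hvS⟩ := Finset.mem_biUnion.mp hv
    exact (hNS S (hcardS S hS)).2.1 v hvS
  -- good event
  set Ev : (Fin p → ℝ) → Set Ω := fun v => {ω | |v ⬝ᵥ (A ω).mulVec v| ≤ s / 2} with hEv
  have hEvMeas : ∀ v, MeasurableSet (Ev v) :=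
    fun v => measurableSet_le (hqmeas v).abs measurable_const
  set Good := ⋂ v ∈ NetTot, Ev v with hGood
  have hGoodMeas : MeasurableSet Good :=
    MeasurableSet.biInter NetTot.countable_toSet fun v _ => hEvMeas v
  -- probability of the bad event
  have hBad : μ Goodᶜ ≤ ENNReal.ofReal δ := by
    have hcompl : Goodᶜ = ⋃ v ∈ NetTot, (Ev v)ᶜ := by
      rw [hGood, Set.compl_iInter₂]
    have hpt : ∀ v ∈ NetTot, μ ((Ev v)ᶜ) ≤ ENNReal.ofReal (δ / (12 * p : ℝ) ^ k) := by
      intro v hv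
      have hvu := hNetUnit v hv
      have heq : (Ev v)ᶜ = {ω | s / 2 < |v ⬝ᵥ (A ω).mulVec v|} := by
        ext ω; simp [hEv, not_le]
      rw [heq]
      have hch := chernoff_abs μ (fun ω => v ⬝ᵥ (A ω).mulVec v) (hqmeas v)
        t (s / 2) (c₁ * t ^ 2 / n) ht0 (hint t v) (hint (-t) v)
        (hmgf t htc v hvu)
        (by
          have := hmgf (-t) (by rwa [abs_neg]) v hvu
          simpa [neg_pow] using this)
      calc μ {ω | s / 2 < |v ⬝ᵥ (A ω).mulVec v|}
          ≤ ENNReal.ofReal (2 * Real.exp (-t * (s / 2) + c₁ * t ^ 2 / n)) := hch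
        _ = ENNReal.ofReal (δ / (12 * p : ℝ) ^ k) := by rw [hexp, h2exp]
    calc μ Goodᶜ ≤ ∑ v ∈ NetTot, μ ((Ev v)ᶜ) := by
          rw [hcompl]; exact measure_biUnion_finset_le _ _
      _ ≤ NetTot.card • ENNReal.ofReal (δ / (12 * p : ℝ) ^ k) :=
          Finset.sum_le_card_nsmul _ _ _ hpt
      _ = ENNReal.ofReal (NetTot.card * (δ / (12 * p : ℝ) ^ k)) := by
          rw [nsmul_eq_mul, ← ENNReal.ofReal_natCast,
            ← ENNReal.ofReal_mul (Nat.cast_nonneg _)]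
      _ ≤ ENNReal.ofReal δ := by
          apply ENNReal.ofReal_le_ofReal
          have h12 : (0:ℝ) < (12 * p : ℝ) ^ k := by positivity
          calc (NetTot.card : ℝ) * (δ / (12 * p : ℝ) ^ k)
              ≤ (12 * p : ℝ) ^ k * (δ / (12 * p : ℝ) ^ k) :=
                mul_le_mul_of_nonneg_right hNetCard (by positivity)
            _ = δ := by field_simp
  -- the good event implies the uniform bound
  have hsubset : Good ⊆ {ω | ∀ u : Fin p → ℝ, (∑ i, (u i) ^ 2) = 1 → kSparse k u →
      |u ⬝ᵥ (A ω).mulVec u| ≤ s} := by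
    intro ω hω u hu hsp
    obtain ⟨s₀, hs₀k, hs₀⟩ := hsp
    have hs₀m : s₀.card ≤ m := by
      refine le_min hs₀k ?_
      calc s₀.card ≤ (Finset.univ : Finset (Fin p)).card := Finset.card_le_univ s₀
        _ = p := by rw [Finset.card_univ, Fintype.card_fin]
    obtain ⟨S, hsubS, hSuniv, hScard⟩ :=
      Finset.exists_subsuperset_card_eq (Finset.subset_univ s₀) hs₀m
        (by rw [Finset.card_univ, Fintype.card_fin]; exact hmp)
    have hS𝒮 : S ∈ 𝒮 := Finset.mem_powersetCard.mpr ⟨Finset.subset_univ S, hScard⟩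
    obtain ⟨-, hNu, hNsup, hNcov⟩ := hNS S hScard
    have husS : ∀ i ∉ S, u i = 0 := fun i hi => hs₀ i fun hmem => hi (hsubS hmem)
    have hbd := det_bound (A ω) S (NS S) (s / 2) (by positivity)
      (fun v hv => by
        have hvTot : v ∈ NetTot := Finset.mem_biUnion.mpr ⟨S, hS𝒮, hv⟩
        exact Set.mem_iInter₂.mp hω v hvTot)
      hNu hNsup hNcov u hu husS
    calc |u ⬝ᵥ (A ω).mulVec u| ≤ 2 * (s / 2) := hbd
      _ = s := by ring
  -- conclude
  have hGoodLB : ENNReal.ofReal (1 - δ) ≤ μ Good := by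
    have hone : μ Good + μ Goodᶜ = 1 := by
      rw [measure_add_measure_compl hGoodMeas, measure_univ]
    rw [← ENNReal.add_le_add_iff_right ENNReal.ofReal_ne_top]
    calc ENNReal.ofReal (1 - δ) + ENNReal.ofReal δ = ENNReal.ofReal 1 := by
          rw [← ENNReal.ofReal_add (by linarith) (by linarith)]; norm_num
      _ = 1 := ENNReal.ofReal_one
      _ = μ Good + μ Goodᶜ := hone.symm
      _ ≤ μ Good + ENNReal.ofReal δ := add_le_add_right hBad _
  exact le_trans hGoodLB (measure_mono hsubset)
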